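/- arXiv:2603.12957 — 4 statements merged into one kernel-verified Lean document; each statement's English description precedes it below -/
import Mathlib

section
/- Let b ∈ C¹([x₀, ∞)) be positive with b' positive and increasing. For a forward Euler step x̄ₙ = x̄_{n-1} + h_{n-1}b(x̄_{n-1}) with h_{n-1} > 0, the discrepancy between the step length and the exact hitting-time increment satisfies |h_{n-1} − ∫_{x̄_{n-1}}^{x̄ₙ} 1/b(x) dx| ≤ b'(x̄ₙ) h_{n-1}². -/
open Set intervalIntegral

/-- Local discrepancy between the Euler step length and the exact hitting-time
increment: `|h − ∫_{x̄_{n-1}}^{x̄ₙ} dx/b(x)| ≤ b'(x̄ₙ) h²`. -/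
theorem euler_local_time_error
    (b b' : ℝ → ℝ) (x₀ h xprev : ℝ)
    (hx₀ : 0 < x₀)
    (hb_pos : ∀ y, x₀ ≤ y → 0 < b y)
    (hb_deriv : ∀ y, x₀ ≤ y → HasDerivAt b (b' y) y)
    (hb'_pos : ∀ y, x₀ ≤ y → 0 < b' y)
    (hb'_mono : MonotoneOn b' (Ici x₀))
    (hxprev : x₀ ≤ xprev)
    (hh : 0 < h) :
    |h - ∫ y in xprev..(xprev + h * b xprev), 1 / b y|
      ≤ b' (xprev + h * b xprev) * h ^ 2 := by
  set c := b xprev with hc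
  set xn := xprev + h * c with hxn
  have hcpos : 0 < c := hb_pos xprev hxprev
  have hle : xprev ≤ xn := by nlinarith
  have hxnx₀ : x₀ ≤ xn := le_trans hxprev hle
  have hIcc : Icc xprev xn ⊆ Ici x₀ := fun y hy => le_trans hxprev hy.1
  -- continuity of b on Ici x₀
  have hbcont : ContinuousOn b (Ici x₀) := fun y hy =>
    (hb_deriv y hy).continuousAt.continuousWithinAt
  -- b is monotone on Ici x₀
  have hbmono : MonotoneOn b (Ici x₀) := by
    apply monotoneOn_of_deriv_nonneg (convex_Ici x₀) hbcont
    · intro y hy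
      rw [interior_Ici] at hy
      exact ((hb_deriv y (le_of_lt hy)).differentiableAt).differentiableWithinAt
    · intro y hy
      rw [interior_Ici] at hy
      rw [(hb_deriv y (le_of_lt hy)).deriv]
      exact (hb'_pos y (le_of_lt hy)).le
  have hbxn : 0 < b xn := hb_pos xn hxnx₀
  -- integrability of 1/b on [xprev, xn]
  have hcontinv : ContinuousOn (fun y => 1 / b y) (Icc xprev xn) := by
    apply ContinuousOn.div continuousOn_const (hbcont.mono hIcc)
    intro y hy; exact (hb_pos y (hIcc hy)).ne'
  have hint : IntervalIntegrable (fun y => 1 / b y) MeasureTheory.volume xprev xn := by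
    apply ContinuousOn.intervalIntegrable
    rwa [uIcc_of_le hle]
  -- upper bound: ∫ ≤ h
  have hup : (∫ y in xprev..xn, 1 / b y) ≤ h := by
    have : (∫ y in xprev..xn, 1 / b y) ≤ ∫ _ in xprev..xn, 1 / c := by
      apply intervalIntegral.integral_mono_on hle hint (intervalIntegrable_const)
      intro y hy
      apply one_div_le_one_div_of_le hcpos
      exact hbmono (mem_Ici.mpr hxprev) (hIcc hy) hy.1
    rw [intervalIntegral.integral_const] at this
    have hdx : xn - xprev = h * c := by rw [hxn]; ring
    rw [hdx, smul_eq_mul] at this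
    have hval : h * c * (1 / c) = h := by field_simp
    linarith [this, hval]
  -- lower bound: ∫ ≥ h * c / b xn
  have hlow : h * c / b xn ≤ ∫ y in xprev..xn, 1 / b y := by
    have : (∫ _ in xprev..xn, 1 / b xn) ≤ ∫ y in xprev..xn, 1 / b y := by
      apply intervalIntegral.integral_mono_on hle intervalIntegrable_const hint
      intro y hy
      apply one_div_le_one_div_of_le (hb_pos y (hIcc hy))
      exact hbmono (hIcc hy) (mem_Ici.mpr hxnx₀) hy.2
    rw [intervalIntegral.integral_const] at this
    have hdx : xn - xprev = h * c := by rw [hxn]; ring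
    rw [hdx, smul_eq_mul] at this
    have hval : h * c * (1 / b xn) = h * c / b xn := by ring
    linarith [this, hval]
  -- MVT bound: b xn - c ≤ b' xn * (h * c)
  have hmvt : b xn - c ≤ b' xn * (h * c) := by
    set g := fun y => b' xn * y - b y with hg
    have hgmono : MonotoneOn g (Icc xprev xn) := by
      apply monotoneOn_of_deriv_nonneg (convex_Icc xprev xn)
      · exact (continuousOn_const.mul continuousOn_id).sub (hbcont.mono hIcc)
      · intro y hy
        rw [interior_Icc] at hy
        have hy' : x₀ ≤ y := le_trans hxprev hy.1.le
        have hder : HasDerivAt g (b' xn - b' y) y := by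
          exact (by simpa using ((hasDerivAt_id y).const_mul (b' xn)).sub (hb_deriv y hy') :
            HasDerivAt ((fun y => b' xn * y) - b) (b' xn - b' y) y)
        exact hder.differentiableAt.differentiableWithinAt
      · intro y hy
        rw [interior_Icc] at hy
        have hy' : x₀ ≤ y := le_trans hxprev hy.1.le
        have hder : HasDerivAt g (b' xn - b' y) y := by
          exact (by simpa using ((hasDerivAt_id y).const_mul (b' xn)).sub (hb_deriv y hy') :
            HasDerivAt ((fun y => b' xn * y) - b) (b' xn - b' y) y)
        rw [hder.deriv]
        have := hb'_mono (mem_Ici.mpr hy') (mem_Ici.mpr hxnx₀) hy.2.le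
        linarith
    have hkey := hgmono (left_mem_Icc.mpr hle) (right_mem_Icc.mpr hle) hle
    simp only [hg] at hkey
    have hdx : h * c = xn - xprev := by rw [hxn]; ring
    rw [hdx]
    nlinarith [hkey]
  -- combine
  have hbc : c ≤ b xn := hbmono (mem_Ici.mpr hxprev) (mem_Ici.mpr hxnx₀) hle
  have h1 : h - (∫ y in xprev..xn, 1 / b y) ≤ h * (b xn - c) / b xn := by
    have : h - h * c / b xn = h * (b xn - c) / b xn := by field_simp
    linarith [hlow]
  have h2 : h * (b xn - c) / b xn ≤ b' xn * h ^ 2 := by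
    rw [div_le_iff₀ hbxn]
    have hb'pos := hb'_pos xn hxnx₀
    nlinarith [mul_le_mul_of_nonneg_left hmvt hh.le,
      mul_le_mul_of_nonneg_left hbc (by positivity : (0:ℝ) ≤ b' xn * h ^ 2)]
  rw [abs_of_nonneg (by linarith)]
  linarith
end

section
/- Under the assumption b(x)·x ≥ Č |x|^{2+α} on D = {|x| > δ} with Č, α > 0, let τ(x₀) be the blow-up time and τ_ε(x₀) the first time |x(t)| ≥ r(ε), where r(ε) = (1/(Č α ε))^{1/α}. Then 0 ≤ τ(x₀) − τ_ε(x₀) ≤ ε for every x₀ ∈ D with |x₀| < r(ε). -/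
open Set Filter

/-- Lemma 1 of the paper: with `r(ε) = (1/(Č α ε))^{1/α}`, the blow-up time `τ`
and the hitting time `τ_ε` of the level `r(ε)` satisfy `0 ≤ τ − τ_ε ≤ ε`. -/
theorem exit_time_close_to_blow_up
    {n : ℕ} (b : EuclideanSpace ℝ (Fin n) → EuclideanSpace ℝ (Fin n))
    (δ Ccheck α ε τ : ℝ) (x₀ : EuclideanSpace ℝ (Fin n))
    (x : ℝ → EuclideanSpace ℝ (Fin n))
    (hδ : 0 < δ)
    (hC : 0 < Ccheck) (hα : 0 < α) (hε : 0 < ε)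
    (hb_growth : ∀ y : EuclideanSpace ℝ (Fin n),
      δ < ‖y‖ → Ccheck * ‖y‖ ^ (2 + α) ≤ (inner ℝ (b y) y : ℝ))
    (hx₀ : δ < ‖x₀‖)
    (hx₀r : ‖x₀‖ < (1 / (Ccheck * α * ε)) ^ (1 / α))
    (hx0 : x 0 = x₀)
    (hτ : 0 < τ)
    (hdom : ∀ t ∈ Ico (0:ℝ) τ, δ < ‖x t‖)
    (hode : ∀ t ∈ Ico (0:ℝ) τ, HasDerivAt x (b (x t)) t)
    -- τ is the blow-up time of the solution:
    (hblow : Tendsto (fun t => ‖x t‖) (nhdsWithin τ (Iio τ)) atTop) :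
    0 ≤ τ - sInf {t : ℝ | 0 ≤ t ∧ (1 / (Ccheck * α * ε)) ^ (1 / α) ≤ ‖x t‖} ∧
    τ - sInf {t : ℝ | 0 ≤ t ∧ (1 / (Ccheck * α * ε)) ^ (1 / α) ≤ ‖x t‖} ≤ ε := by
  set r : ℝ := (1 / (Ccheck * α * ε)) ^ (1 / α) with hr
  set S : Set ℝ := {t : ℝ | 0 ≤ t ∧ r ≤ ‖x t‖} with hS
  have hCαε : (0:ℝ) < Ccheck * α * ε := by positivity
  have hbase : (0:ℝ) < 1 / (Ccheck * α * ε) := by positivity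
  have hrpos : 0 < r := Real.rpow_pos_of_pos hbase _
  have hrα : r ^ (-α) = Ccheck * α * ε := by
    rw [hr, ← Real.rpow_mul hbase.le]
    have h1 : (1/α) * (-α) = -1 := by field_simp
    rw [h1, Real.rpow_neg_one, one_div, inv_inv]
  -- conversion between inner-square and norm rpow
  have hconv : ∀ s : EuclideanSpace ℝ (Fin n), ∀ q : ℝ,
      ((‖s‖ ^ 2 : ℝ)) ^ q = ‖s‖ ^ (2 * q) := by
    intro s q
    rw [← Real.rpow_natCast ‖s‖ 2, ← Real.rpow_mul (norm_nonneg _)]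
    norm_num
  -- key differential inequality
  have key : ∀ t1 ∈ Ico (0:ℝ) τ, ∀ t2 ∈ Ico (0:ℝ) τ, t1 ≤ t2 →
      Ccheck * α * (t2 - t1) + ‖x t2‖ ^ (-α) ≤ ‖x t1‖ ^ (-α) := by
    intro t1 ht1 t2 ht2 h12
    set g : ℝ → ℝ := fun s => (inner ℝ (x s) (x s) : ℝ) ^ (-(α/2)) + Ccheck * α * s with hg
    have hsub : Icc t1 t2 ⊆ Ico (0:ℝ) τ := fun s hs => ⟨le_trans ht1.1 hs.1, lt_of_le_of_lt hs.2 ht2.2⟩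
    have hderiv : ∀ s ∈ Ico (0:ℝ) τ, ∃ d ≤ 0, HasDerivAt g d s := by
      intro s hs
      have hns : δ < ‖x s‖ := hdom s hs
      have hnpos : (0:ℝ) < ‖x s‖ := hδ.trans hns
      have hy : HasDerivAt (fun u => (inner ℝ (x u) (x u) : ℝ))
          (2 * (inner ℝ (b (x s)) (x s) : ℝ)) s := by
        have h := HasDerivAt.inner ℝ (hode s hs) (hode s hs)
        exact h.congr_deriv (by rw [real_inner_comm]; ring)
      have hy0 : (inner ℝ (x s) (x s) : ℝ) = ‖x s‖ ^ 2 := real_inner_self_eq_norm_sq _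
      have hyne : (inner ℝ (x s) (x s) : ℝ) ≠ 0 := by rw [hy0]; positivity
      refine ⟨(2 * (inner ℝ (b (x s)) (x s) : ℝ)) * (-(α/2)) *
        (inner ℝ (x s) (x s) : ℝ) ^ (-(α/2) - 1) + Ccheck * α, ?_, ?_⟩
      · -- the derivative is ≤ 0
        have hib : Ccheck * ‖x s‖ ^ (2 + α) ≤ (inner ℝ (b (x s)) (x s) : ℝ) := hb_growth _ hns
        have hyrw : (inner ℝ (x s) (x s) : ℝ) ^ (-(α/2) - 1) = ‖x s‖ ^ (2 * (-(α/2) - 1)) := by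
          rw [hy0, hconv]
        have hpow_pos : (0:ℝ) < ‖x s‖ ^ (2 * (-(α/2) - 1)) := Real.rpow_pos_of_pos hnpos _
        have hprod : ‖x s‖ ^ (2 + α) * ‖x s‖ ^ (2 * (-(α/2) - 1)) = 1 := by
          rw [← Real.rpow_add hnpos]
          have : 2 + α + 2 * (-(α/2) - 1) = 0 := by ring
          rw [this, Real.rpow_zero]
        have hin_pos : (0:ℝ) < Ccheck * ‖x s‖ ^ (2 + α) := by positivity
        have hib2 : Ccheck * ‖x s‖ ^ (2 + α) * (α * ‖x s‖ ^ (2 * (-(α/2) - 1))) ≤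
            (inner ℝ (b (x s)) (x s) : ℝ) * (α * ‖x s‖ ^ (2 * (-(α/2) - 1))) := by
          apply mul_le_mul_of_nonneg_right hib
          positivity
        have hlhs : Ccheck * ‖x s‖ ^ (2 + α) * (α * ‖x s‖ ^ (2 * (-(α/2) - 1))) = Ccheck * α := by
          have := hprod
          nlinarith [hprod]
        rw [hyrw]
        nlinarith [hib2, hlhs]
      · have hg1 := hy.rpow_const (p := -(α/2)) (Or.inl hyne)
        have hg2 : HasDerivAt (fun u : ℝ => Ccheck * α * u) (Ccheck * α) s := by
          simpa using (hasDerivAt_id s).const_mul (Ccheck * α)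
        exact hg1.add hg2
    have hanti : AntitoneOn g (Icc t1 t2) := by
      apply antitoneOn_of_deriv_nonpos (convex_Icc t1 t2)
      · intro s hs
        obtain ⟨d, _, hd⟩ := hderiv s (hsub hs)
        exact hd.continuousAt.continuousWithinAt
      · intro s hs
        rw [interior_Icc] at hs
        obtain ⟨d, _, hd⟩ := hderiv s (hsub (Ioo_subset_Icc_self hs))
        exact hd.differentiableAt.differentiableWithinAt
      · intro s hs
        rw [interior_Icc] at hs
        obtain ⟨d, hd0, hd⟩ := hderiv s (hsub (Ioo_subset_Icc_self hs))
        rw [hd.deriv]; exact hd0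
    have hgt : g t2 ≤ g t1 := hanti (left_mem_Icc.mpr h12) (right_mem_Icc.mpr h12) h12
    have hrw : ∀ s ∈ Ico (0:ℝ) τ, (inner ℝ (x s) (x s) : ℝ) ^ (-(α/2)) = ‖x s‖ ^ (-α) := by
      intro s hs
      rw [real_inner_self_eq_norm_sq, hconv]
      congr 1; ring
    rw [hg] at hgt
    simp only at hgt
    rw [hrw t1 ht1, hrw t2 ht2] at hgt
    linarith
  -- from the key inequality: if r ≤ ‖x t‖ at some t ∈ [0, τ), then τ - t ≤ ε
  have hclose : ∀ t ∈ Ico (0:ℝ) τ, r ≤ ‖x t‖ → τ - t ≤ ε := by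
    intro t ht htr
    by_contra hcon
    push_neg at hcon
    have ht2 : t + ε ∈ Ico (0:ℝ) τ := ⟨by linarith [ht.1, hε.le], by linarith⟩
    have hk := key t ht (t + ε) ht2 (by linarith)
    have h1 : ‖x t‖ ^ (-α) ≤ r ^ (-α) :=
      Real.rpow_le_rpow_of_nonpos hrpos htr (by linarith)
    have h2 : (0:ℝ) < ‖x (t + ε)‖ ^ (-α) :=
      Real.rpow_pos_of_pos (hδ.trans (hdom _ ht2)) _
    rw [hrα] at h1
    have : Ccheck * α * (t + ε - t) = Ccheck * α * ε := by ring
    nlinarith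
  -- S is nonempty with an element < τ
  have hne : ∃ t0, t0 ∈ S ∧ t0 < τ := by
    have hev : ∀ᶠ t in nhdsWithin τ (Iio τ), r ≤ ‖x t‖ := hblow.eventually_ge_atTop r
    have hmem : Ioi (0:ℝ) ∈ nhdsWithin τ (Iio τ) :=
      mem_nhdsWithin_of_mem_nhds (isOpen_Ioi.mem_nhds hτ)
    have : ∀ᶠ t in nhdsWithin τ (Iio τ), (r ≤ ‖x t‖ ∧ 0 < t) :=
      hev.and hmem
    obtain ⟨t0, ht0⟩ := (this.and self_mem_nhdsWithin).exists
    exact ⟨t0, ⟨ht0.1.2.le, ht0.1.1⟩, ht0.2⟩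
  obtain ⟨t0, ht0S, ht0τ⟩ := hne
  have hbdd : BddBelow S := ⟨0, fun t ht => ht.1⟩
  have hinf_le : sInf S ≤ t0 := csInf_le hbdd ht0S
  have hinf_ge : τ - ε ≤ sInf S := by
    apply le_csInf ⟨t0, ht0S⟩
    intro t ht
    rcases lt_or_ge t τ with h | h
    · have := hclose t ⟨ht.1, h⟩ ht.2
      linarith
    · linarith
  constructor
  · linarith
  · linarith
end

section
/- Let b ∈ C¹(D, ℝⁿ) on D = {|x| > δ} with δ > 1, and suppose b(x)·x ≥ Č |x|² (log|x|)^{1+α} on D for constants Č, α > 0. Set r(ε) = exp((1/(Č α ε))^{1/α}). Then for any x₀ ∈ D, the blow-up time τ(x₀) and the exit time τ_ε(x₀) of the ball of radius r(ε) satisfy 0 ≤ τ(x₀) − τ_ε(x₀) ≤ ε. -/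
open Set Filter

/-- Corollary 1 of the paper (slower growth): if `b(x)·x ≥ Č |x|² (log|x|)^{1+α}`
on `D = {|x| > δ}` with `δ > 1` and `r(ε) = exp((1/(Č α ε))^{1/α})`, then the
blow-up time `τ` and the exit time `τ_ε` of the ball of radius `r(ε)` satisfy
`0 ≤ τ − τ_ε ≤ ε`. -/
theorem exit_time_close_to_blow_up_log
    {n : ℕ} (b : EuclideanSpace ℝ (Fin n) → EuclideanSpace ℝ (Fin n))
    (δ Ccheck α ε τ : ℝ) (x₀ : EuclideanSpace ℝ (Fin n))
    (x : ℝ → EuclideanSpace ℝ (Fin n))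
    (hδ : 1 < δ)
    (hC : 0 < Ccheck) (hα : 0 < α) (hε : 0 < ε)
    (hb_smooth : ContDiffOn ℝ 1 b {y | δ < ‖y‖})
    (hb_growth : ∀ y : EuclideanSpace ℝ (Fin n),
      δ < ‖y‖ → Ccheck * ‖y‖ ^ 2 * Real.log ‖y‖ ^ (1 + α) ≤ (inner ℝ (b y) y : ℝ))
    (hx₀ : δ < ‖x₀‖)
    (hx₀r : ‖x₀‖ < Real.exp ((1 / (Ccheck * α * ε)) ^ (1 / α)))
    (hx0 : x 0 = x₀)
    (hτ : 0 < τ)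
    (hdom : ∀ t ∈ Ico (0:ℝ) τ, δ < ‖x t‖)
    (hode : ∀ t ∈ Ico (0:ℝ) τ, HasDerivAt x (b (x t)) t)
    (hblow : Tendsto (fun t => ‖x t‖) (nhdsWithin τ (Iio τ)) atTop) :
    0 ≤ τ - sInf {t : ℝ | 0 ≤ t ∧ Real.exp ((1 / (Ccheck * α * ε)) ^ (1 / α)) ≤ ‖x t‖} ∧
    τ - sInf {t : ℝ | 0 ≤ t ∧ Real.exp ((1 / (Ccheck * α * ε)) ^ (1 / α)) ≤ ‖x t‖} ≤ ε := by
  set L₀ : ℝ := (1 / (Ccheck * α * ε)) ^ (1 / α) with hL₀def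
  set R : ℝ := Real.exp L₀ with hRdef
  have hCαε : (0:ℝ) < Ccheck * α * ε := by positivity
  have hL₀ : 0 < L₀ := Real.rpow_pos_of_pos (by positivity) _
  have hL₀α : L₀ ^ α = 1 / (Ccheck * α * ε) := by
    rw [hL₀def, ← Real.rpow_mul (by positivity), one_div α, inv_mul_cancel₀ hα.ne',
      Real.rpow_one]
  have h2pos : (0:ℝ) < (2:ℝ) ^ α := Real.rpow_pos_of_pos (by norm_num) _
  set c : ℝ := (2:ℝ) ^ α / (Ccheck * α) with hcdef
  have hcpos : 0 < c := by positivity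
  set f : ℝ → ℝ := fun t => t + c * Real.log (‖x t‖ ^ 2) ^ (-α) with hfdef
  -- positivity of logs along the trajectory
  have hlogpos : ∀ t ∈ Ico (0:ℝ) τ, 0 < Real.log (‖x t‖ ^ 2) := by
    intro t ht
    have hN : 1 < ‖x t‖ := hδ.trans (hdom t ht)
    apply Real.log_pos
    nlinarith
  -- derivative of f
  have hderiv : ∀ t ∈ Ico (0:ℝ) τ, HasDerivAt f
      (1 + c * (-α * Real.log (‖x t‖ ^ 2) ^ (-α - 1) *
        (2 * (inner ℝ (b (x t)) (x t) : ℝ) / ‖x t‖ ^ 2))) t := by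
    intro t ht
    have hx := hode t ht
    have hN : 1 < ‖x t‖ := hδ.trans (hdom t ht)
    have hNsq : (0:ℝ) < ‖x t‖ ^ 2 := by positivity
    have hy : HasDerivAt (fun s => ‖x s‖ ^ 2) (2 * (inner ℝ (b (x t)) (x t) : ℝ)) t := by
      have h1 := HasDerivAt.inner ℝ hx hx
      have h2 : (fun s => (inner ℝ (x s) (x s) : ℝ)) = fun s => ‖x s‖ ^ 2 := by
        funext s; exact real_inner_self_eq_norm_sq _
      rw [h2] at h1
      refine h1.congr_deriv ?_
      rw [real_inner_comm]
      ring
    have hlog : HasDerivAt (fun s => Real.log (‖x s‖ ^ 2))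
        (2 * (inner ℝ (b (x t)) (x t) : ℝ) / ‖x t‖ ^ 2) t := hy.log hNsq.ne'
    have hLpos := hlogpos t ht
    have hpow : HasDerivAt (fun u : ℝ => u ^ (-α))
        (-α * Real.log (‖x t‖ ^ 2) ^ (-α - 1)) (Real.log (‖x t‖ ^ 2)) :=
      Real.hasDerivAt_rpow_const (Or.inl hLpos.ne')
    have hcomp := hpow.comp t hlog
    exact (hasDerivAt_id t).add (hcomp.const_mul c)
  -- the derivative is nonpositive
  have hnonpos : ∀ t ∈ Ico (0:ℝ) τ,
      (1 + c * (-α * Real.log (‖x t‖ ^ 2) ^ (-α - 1) *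
        (2 * (inner ℝ (b (x t)) (x t) : ℝ) / ‖x t‖ ^ 2))) ≤ 0 := by
    intro t ht
    have hN : 1 < ‖x t‖ := hδ.trans (hdom t ht)
    have hNsq : (0:ℝ) < ‖x t‖ ^ 2 := by positivity
    have hLN : 0 < Real.log ‖x t‖ := Real.log_pos hN
    have hIP := hb_growth (x t) (hdom t ht)
    have h2L : Real.log (‖x t‖ ^ 2) = 2 * Real.log ‖x t‖ := by
      rw [Real.log_pow]; norm_num
    have hP : Real.log (‖x t‖ ^ 2) ^ (-α - 1)
        = ((2:ℝ) ^ (1 + α) * Real.log ‖x t‖ ^ (1 + α))⁻¹ := by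
      rw [h2L, show (-α - 1 : ℝ) = -(1 + α) by ring,
        Real.rpow_neg (by positivity), Real.mul_rpow (by norm_num) hLN.le]
    have hLN1α : (0:ℝ) < Real.log ‖x t‖ ^ (1 + α) := Real.rpow_pos_of_pos hLN _
    have h21α : (0:ℝ) < (2:ℝ) ^ (1 + α) := Real.rpow_pos_of_pos (by norm_num) _
    have h2split : (2:ℝ) ^ (1 + α) = 2 * (2:ℝ) ^ α := by
      rw [Real.rpow_add (by norm_num), Real.rpow_one]
    have hPpos : 0 < Real.log (‖x t‖ ^ 2) ^ (-α - 1) := by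
      rw [hP]; positivity
    -- the value at the lower bound equals exactly 1
    have hexact : c * α * Real.log (‖x t‖ ^ 2) ^ (-α - 1) *
        (2 * (Ccheck * ‖x t‖ ^ 2 * Real.log ‖x t‖ ^ (1 + α)) / ‖x t‖ ^ 2) = 1 := by
      rw [hP, h2split, hcdef]
      field_simp
    have hmono : c * α * Real.log (‖x t‖ ^ 2) ^ (-α - 1) *
        (2 * (Ccheck * ‖x t‖ ^ 2 * Real.log ‖x t‖ ^ (1 + α)) / ‖x t‖ ^ 2)
        ≤ c * α * Real.log (‖x t‖ ^ 2) ^ (-α - 1) *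
        (2 * (inner ℝ (b (x t)) (x t) : ℝ) / ‖x t‖ ^ 2) := by
      gcongr
    rw [hexact] at hmono
    nlinarith [hmono]
  -- f is antitone on [0, τ)
  have hanti : AntitoneOn f (Ico 0 τ) := by
    apply antitoneOn_of_deriv_nonpos (convex_Ico 0 τ)
    · exact fun t ht => (hderiv t ht).continuousAt.continuousWithinAt
    · rw [interior_Ico]
      exact fun t ht =>
        ((hderiv t (Ioo_subset_Ico_self ht)).differentiableAt).differentiableWithinAt
    · rw [interior_Ico]
      intro t ht
      rw [(hderiv t (Ioo_subset_Ico_self ht)).deriv]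
      exact hnonpos t (Ioo_subset_Ico_self ht)
  -- key bound on the "remaining time" term at a point where ‖x t₀‖ ≥ R
  have hkeybound : ∀ t₀ ∈ Ico (0:ℝ) τ, R ≤ ‖x t₀‖ →
      c * Real.log (‖x t₀‖ ^ 2) ^ (-α) ≤ ε := by
    intro t₀ ht₀ hRle
    have hRpos : (0:ℝ) < R := Real.exp_pos _
    have hlogR : Real.log R = L₀ := Real.log_exp _
    have hLN : L₀ ≤ Real.log ‖x t₀‖ := by
      rw [← hlogR]; exact Real.log_le_log hRpos hRle
    have h2L : Real.log (‖x t₀‖ ^ 2) = 2 * Real.log ‖x t₀‖ := by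
      rw [Real.log_pow]; norm_num
    have hstep : Real.log (‖x t₀‖ ^ 2) ^ (-α) ≤ (2 * L₀) ^ (-α) := by
      rw [h2L]
      exact Real.rpow_le_rpow_of_nonpos (by positivity) (by linarith) (by linarith)
    have hval : c * (2 * L₀) ^ (-α) = ε := by
      rw [Real.rpow_neg (by positivity), Real.mul_rpow (by norm_num) hL₀.le, hL₀α, hcdef]
      field_simp
    calc c * Real.log (‖x t₀‖ ^ 2) ^ (-α) ≤ c * (2 * L₀) ^ (-α) := by gcongr
      _ = ε := hval
  -- Step A : exit points below τ are within ε of τ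
  have stepA : ∀ t₀ ∈ Ico (0:ℝ) τ, R ≤ ‖x t₀‖ → τ ≤ t₀ + ε := by
    intro t₀ ht₀ hRle
    have hbound : ∀ t ∈ Ico (0:ℝ) τ, t₀ ≤ t → t ≤ t₀ + ε := by
      intro t ht htt
      have hf := hanti ht₀ ht htt
      have hA : 0 ≤ c * Real.log (‖x t‖ ^ 2) ^ (-α) := by
        have := (hlogpos t ht).le
        positivity
      have hkey := hkeybound t₀ ht₀ hRle
      simp only [hfdef] at hf
      linarith
    by_contra hcon
    push_neg at hcon
    have h1 : (t₀ + ε + τ) / 2 ∈ Ico (0:ℝ) τ := ⟨by linarith [ht₀.1], by linarith⟩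
    have := hbound _ h1 (by linarith)
    linarith
  -- witness below τ where the trajectory is already outside the ball
  have hAev : ∀ᶠ t in nhdsWithin τ (Iio τ), R ≤ ‖x t‖ := hblow.eventually_ge_atTop R
  have hBev : ∀ᶠ t in nhdsWithin τ (Iio τ), 0 < t :=
    (eventually_gt_nhds hτ).filter_mono nhdsWithin_le_nhds
  have hCev : ∀ᶠ t in nhdsWithin τ (Iio τ), t < τ := eventually_mem_nhdsWithin
  obtain ⟨t₁, hRt₁, h0t₁, ht₁τ⟩ := (hAev.and (hBev.and hCev)).exists
  set S : Set ℝ := {t : ℝ | 0 ≤ t ∧ R ≤ ‖x t‖} with hSdef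
  have hSne : S.Nonempty := ⟨t₁, h0t₁.le, hRt₁⟩
  have hSbdd : BddBelow S := ⟨0, fun s hs => hs.1⟩
  have hupper : sInf S ≤ τ := (csInf_le hSbdd ⟨h0t₁.le, hRt₁⟩).trans ht₁τ.le
  have hlower : τ - ε ≤ sInf S := by
    apply le_csInf hSne
    intro s hs
    by_cases h : s < τ
    · have := stepA s ⟨hs.1, h⟩ hs.2
      linarith
    · push_neg at h
      linarith
  exact ⟨by linarith, by linarith⟩
end

section
/- Suppose b : D → ℝⁿ satisfies the directionality condition b(x)·x ≥ C₂ |b(x)| |x| for all x ∈ D and some C₂ ∈ (0, 1]. Then for a forward Euler step x̄ₙ = x̄_{n-1} + h b(x̄_{n-1}) with h > 0 and x̄_{n-1} ∈ D, one has |x̄ₙ| ≥ |x̄_{n-1}| + C₂ |b(x̄_{n-1})| h. -/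
open Set

/-- Case (a) of Lemma 2: under the directionality condition
`b(x)·x ≥ C₂ |b(x)| |x|`, an Euler step increases the norm by at least
`C₂ |b(x̄_{n-1})| h`. -/
theorem euler_norm_increase_directional
    {n : ℕ} (b : EuclideanSpace ℝ (Fin n) → EuclideanSpace ℝ (Fin n))
    (δ C₂ h : ℝ) (xprev : EuclideanSpace ℝ (Fin n))
    (hδ : 0 < δ)
    (hC₂ : 0 < C₂) (hC₂' : C₂ ≤ 1)
    (hdir : ∀ y : EuclideanSpace ℝ (Fin n),
      δ < ‖y‖ → C₂ * ‖b y‖ * ‖y‖ ≤ (inner ℝ (b y) y : ℝ))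
    (hxprev : δ < ‖xprev‖)
    (hh : 0 < h) :
    ‖xprev‖ + C₂ * ‖b xprev‖ * h ≤ ‖xprev + h • b xprev‖ := by
  have hx : 0 < ‖xprev‖ := hδ.trans hxprev
  have hib := hdir xprev hxprev
  have hinner : (inner ℝ (xprev + h • b xprev) xprev : ℝ)
      = ‖xprev‖ ^ 2 + h * (inner ℝ (b xprev) xprev : ℝ) := by
    rw [inner_add_left, real_inner_smul_left, real_inner_self_eq_norm_sq]
  have hCS : (inner ℝ (xprev + h • b xprev) xprev : ℝ)
      ≤ ‖xprev + h • b xprev‖ * ‖xprev‖ := real_inner_le_norm _ _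
  have key : (‖xprev‖ + C₂ * ‖b xprev‖ * h) * ‖xprev‖
      ≤ ‖xprev + h • b xprev‖ * ‖xprev‖ := by
    refine le_trans ?_ hCS
    rw [hinner]
    nlinarith [hib, hh.le, hx.le]
  exact le_of_mul_le_mul_right key hx
end
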